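/- Fix ℓ > 0. As n → ∞, the magnitude of the n-point equally-spaced approximation to the circle of circumference ℓ with the intrinsic (arc-length) metric converges: n / (Σ_{j=0}^{n−1} exp(−(ℓ/n)·min(j, n−j))) → (ℓ/2)/(1 − exp(−ℓ/2)). -/

import Mathlib

open Filter Topology

private lemma aux_tendsto_half (c : ℕ → ℕ) (hl : ∀ n, n ≤ 2 * c n)
    (hu : ∀ n, 2 * c n ≤ n + 2) :
    Tendsto (fun n : ℕ => (c n : ℝ) / n) atTop (𝓝 (1/2)) := by
  have h2 : Tendsto (fun n : ℕ => 1/2 + 1/(n:ℝ)) atTop (𝓝 (1/2)) := by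
    simpa using tendsto_const_nhds.add (tendsto_one_div_atTop_nhds_zero_nat (𝕜 := ℝ))
  refine tendsto_of_tendsto_of_tendsto_of_le_of_le' tendsto_const_nhds h2 ?_ ?_
  · filter_upwards [eventually_ge_atTop 1] with n hn
    have hn0 : (0:ℝ) < n := by exact_mod_cast hn
    rw [le_div_iff₀ hn0]
    have h : (n:ℝ) ≤ 2 * c n := by exact_mod_cast hl n
    linarith
  · filter_upwards [eventually_ge_atTop 1] with n hn
    have hn0 : (0:ℝ) < n := by exact_mod_cast hn
    rw [div_le_iff₀ hn0]
    have h : (2 * (c n) : ℝ) ≤ (n:ℝ) + 2 := by exact_mod_cast hu n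
    have h1 : (1/(n:ℝ)) * n = 1 := by field_simp
    nlinarith

private lemma aux_exp_tendsto (ℓ : ℝ) (c : ℕ → ℕ)
    (h : Tendsto (fun n : ℕ => (c n : ℝ)/n) atTop (𝓝 (1/2))) :
    Tendsto (fun n : ℕ => Real.exp (-(ℓ/n)) ^ (c n)) atTop (𝓝 (Real.exp (-ℓ/2))) := by
  have h1 : Tendsto (fun n : ℕ => -ℓ * ((c n : ℝ)/n)) atTop (𝓝 (-ℓ * (1/2))) :=
    h.const_mul _
  have h3 : Tendsto (fun n : ℕ => Real.exp (-ℓ * ((c n : ℝ)/n))) atTop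
      (𝓝 (Real.exp (-ℓ * (1/2)))) := (Real.continuous_exp.tendsto _).comp h1
  rw [show -ℓ * (1/2) = -ℓ/2 by ring] at h3
  refine h3.congr fun n => ?_
  rw [← Real.exp_nat_mul]
  congr 1
  ring

private lemma aux_sum_eq (ℓ : ℝ) (n : ℕ) (hn : 1 ≤ n) :
    ∑ j ∈ Finset.range n, Real.exp (-(ℓ / n) * (min j (n - j) : ℕ))
      = (∑ j ∈ Finset.range (n/2 + 1), Real.exp (-(ℓ/n)) ^ j)
        + ((∑ j ∈ Finset.range (n - n/2), Real.exp (-(ℓ/n)) ^ j) - 1) := by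
  set r := Real.exp (-(ℓ/n)) with hr
  have hterm : ∀ j : ℕ, Real.exp (-(ℓ / n) * (min j (n - j) : ℕ)) = r ^ min j (n-j) := by
    intro j
    rw [hr, ← Real.exp_nat_mul]
    congr 1
    ring
  have hmn : n/2 + 1 ≤ n := by omega
  have hc1 : n - (n/2 + 1) + 1 = n - n/2 := by omega
  calc ∑ j ∈ Finset.range n, Real.exp (-(ℓ / n) * (min j (n - j) : ℕ))
      = ∑ j ∈ Finset.range n, r ^ min j (n-j) :=
        Finset.sum_congr rfl (fun j _ => hterm j)
    _ = ∑ j ∈ Finset.Ico 0 (n/2+1), r ^ min j (n-j)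
        + ∑ j ∈ Finset.Ico (n/2+1) n, r ^ min j (n-j) := by
        rw [Finset.range_eq_Ico, ← Finset.sum_Ico_consecutive _ (Nat.zero_le _) hmn]
    _ = ∑ j ∈ Finset.range (n/2+1), r ^ j
        + ∑ j ∈ Finset.Ico (n/2+1) n, r ^ (n - j) := by
        rw [← Finset.range_eq_Ico]
        congr 1
        · refine Finset.sum_congr rfl fun j hj => ?_
          rw [Finset.mem_range] at hj
          congr 1
          omega
        · refine Finset.sum_congr rfl fun j hj => ?_
          rw [Finset.mem_Ico] at hj
          congr 1
          omega
    _ = ∑ j ∈ Finset.range (n/2+1), r ^ j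
        + ∑ i ∈ Finset.range (n - (n/2+1)), r ^ ((n - (n/2+1)) - i) := by
        rw [Finset.sum_Ico_eq_sum_range]
        congr 1
        refine Finset.sum_congr rfl fun i hi => ?_
        rw [Finset.mem_range] at hi
        congr 1
        omega
    _ = ∑ j ∈ Finset.range (n/2+1), r ^ j
        + ∑ i ∈ Finset.range (n - (n/2+1)), r ^ (i + 1) := by
        congr 1
        rw [← Finset.sum_range_reflect (fun j => r ^ (j+1)) (n - (n/2+1))]
        refine Finset.sum_congr rfl fun i hi => ?_
        rw [Finset.mem_range] at hi
        congr 1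
        omega
    _ = (∑ j ∈ Finset.range (n/2 + 1), r ^ j)
        + ((∑ j ∈ Finset.range (n - n/2), r ^ j) - 1) := by
        congr 1
        rw [← hc1, Finset.sum_range_succ' (fun j => r ^ j)]
        simp

theorem intrinsic_circle_magnitude_limit (ℓ : ℝ) (hℓ : 0 < ℓ) :
    Tendsto
      (fun n : ℕ => (n : ℝ) /
        ∑ j ∈ Finset.range n, Real.exp (-(ℓ / n) * (min j (n - j) : ℕ)))
      atTop
      (𝓝 ((ℓ / 2) / (1 - Real.exp (-ℓ / 2)))) := by
  set E := Real.exp (-ℓ/2) with hE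
  have hE1 : E < 1 := by
    rw [hE]
    exact Real.exp_lt_one_iff.mpr (by linarith)
  have hEpos : 0 < 1 - E := by linarith
  -- slope of exp at 0
  have hslope : Tendsto (fun y : ℝ => (Real.exp y - 1)/y) (𝓝[≠] (0:ℝ)) (𝓝 1) := by
    have h := hasDerivAt_iff_tendsto_slope.mp (Real.hasDerivAt_exp 0)
    rw [Real.exp_zero] at h
    refine h.congr fun y => ?_
    simp [slope_def_field]
  have hy : Tendsto (fun n : ℕ => -ℓ/(n:ℝ)) atTop (𝓝[≠] (0:ℝ)) := by
    rw [tendsto_nhdsWithin_iff]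
    refine ⟨tendsto_const_div_atTop_nhds_zero_nat (-ℓ), ?_⟩
    filter_upwards [eventually_ge_atTop 1] with n hn
    have hn0 : (0:ℝ) < n := by exact_mod_cast hn
    simp only [Set.mem_compl_iff, Set.mem_singleton_iff]
    exact div_ne_zero (by linarith) hn0.ne'
  have hA : Tendsto (fun n : ℕ => (n:ℝ) * (1 - Real.exp (-(ℓ/n)))) atTop (𝓝 ℓ) := by
    have h1 : Tendsto (fun n : ℕ => ℓ * ((Real.exp (-ℓ/(n:ℝ)) - 1)/(-ℓ/(n:ℝ))))
        atTop (𝓝 (ℓ * 1)) := (hslope.comp hy).const_mul ℓ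
    rw [mul_one] at h1
    refine h1.congr' ?_
    filter_upwards [eventually_ge_atTop 1] with n hn
    have hn0 : (0:ℝ) < n := by exact_mod_cast hn
    rw [show -(ℓ/(n:ℝ)) = -ℓ/(n:ℝ) by ring]
    set x := Real.exp (-ℓ/(n:ℝ))
    field_simp [hℓ.ne']
    ring
  have hm : Tendsto (fun n : ℕ => ((n/2 + 1 : ℕ) : ℝ)/n) atTop (𝓝 (1/2)) :=
    aux_tendsto_half _ (fun n => by omega) (fun n => by omega)
  have hk : Tendsto (fun n : ℕ => ((n - n/2 : ℕ) : ℝ)/n) atTop (𝓝 (1/2)) :=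
    aux_tendsto_half _ (fun n => by omega) (fun n => by omega)
  have h1 := aux_exp_tendsto ℓ _ hm
  have h2 := aux_exp_tendsto ℓ _ hk
  rw [← hE] at h1 h2
  have hSn : Tendsto (fun n : ℕ =>
      (∑ j ∈ Finset.range n, Real.exp (-(ℓ / n) * (min j (n - j) : ℕ))) / n) atTop
      (𝓝 ((1-E)/ℓ + (1-E)/ℓ - 0)) := by
    have hF : Tendsto (fun n : ℕ =>
        (1 - Real.exp (-(ℓ/n)) ^ (n/2+1)) / ((n:ℝ) * (1 - Real.exp (-(ℓ/n))))
        + (1 - Real.exp (-(ℓ/n)) ^ (n - n/2)) / ((n:ℝ) * (1 - Real.exp (-(ℓ/n))))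
        - 1/(n:ℝ)) atTop (𝓝 ((1-E)/ℓ + (1-E)/ℓ - 0)) :=
      (((tendsto_const_nhds.sub h1).div hA hℓ.ne').add
        ((tendsto_const_nhds.sub h2).div hA hℓ.ne')).sub
        tendsto_one_div_atTop_nhds_zero_nat
    refine hF.congr' ?_
    filter_upwards [eventually_ge_atTop 1] with n hn
    rw [aux_sum_eq ℓ n hn]
    have hn0 : (0:ℝ) < n := by exact_mod_cast hn
    have hrlt : Real.exp (-(ℓ/(n:ℝ))) < 1 :=
      Real.exp_lt_one_iff.mpr (neg_lt_zero.mpr (by positivity))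
    have hrne : Real.exp (-(ℓ/(n:ℝ))) - 1 ≠ 0 := by
      intro h; apply absurd hrlt; rw [show Real.exp (-(ℓ/(n:ℝ))) = 1 by linarith]; simp
    rw [geom_sum_eq (by intro h; exact hrne (by rw [h]; ring)) (n/2+1),
        geom_sum_eq (by intro h; exact hrne (by rw [h]; ring)) (n - n/2)]
    set r := Real.exp (-(ℓ/(n:ℝ)))
    have h1r : (1:ℝ) - r ≠ 0 := fun h => hrne (by linarith)
    field_simp
    ring
  have hpos : (0:ℝ) < (1-E)/ℓ + (1-E)/ℓ - 0 := by
    have := div_pos hEpos hℓ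
    linarith
  have hfinal := hSn.inv₀ hpos.ne'
  rw [show ((1-E)/ℓ + (1-E)/ℓ - 0)⁻¹ = (ℓ/2)/(1-E) by
    rw [sub_zero, ← add_div, inv_div,
      show (1-E+(1-E)) = 2*(1-E) by ring, ← div_div]] at hfinal
  exact hfinal.congr fun n => by rw [inv_div]
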